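/- (Rate region for perfect three-source codes) Suppose a perfect three-source Slepian-Wolf code for Hamming sources of length n with total rate M exists, with null spaces decomposed as C ⊕ U, C ⊕ V, W where C = the span of all pairwise intersections, and denote the dimensions by c, u, v, w. Then 3n − 2M ≤ c ≤ 3n − 2M + 3 and M − n − 2 ≤ u, v, w ≤ M − n. -/

import Mathlib

/-- Hamming weight of a binary vector. -/
def wt {n : ℕ} (v : Fin n → ZMod 2) : ℕ := (Finset.univ.filter fun j => v j ≠ 0).card

/-- The set of `s`-terminal Hamming sources of length `n`. -/
def hammingS (s n : ℕ) : Set (Fin s → Fin n → ZMod 2) :=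
  {x | ∃ (b : Fin n → ZMod 2) (v : Fin s → Fin n → ZMod 2),
    (∀ i, x i = b + v i) ∧ (∑ i, wt (v i)) ≤ 1}

lemma wt_zero {n : ℕ} : wt (0 : Fin n → ZMod 2) = 0 := by
  simp [wt]

lemma wt_single {n : ℕ} (j : Fin n) : wt (Pi.single j (1 : ZMod 2)) = 1 := by
  rw [wt]
  have : (Finset.univ.filter fun j' => (Pi.single j (1:ZMod 2) : Fin n → ZMod 2) j' ≠ 0) = {j} := by
    ext j'
    rcases eq_or_ne j' j with rfl | hne
    · simp
    · simp [Pi.single_eq_of_ne hne, hne]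
  rw [this]
  simp

lemma eq_zero_of_wt_eq_zero {n : ℕ} {v : Fin n → ZMod 2} (h : wt v = 0) : v = 0 := by
  rw [wt, Finset.card_eq_zero, Finset.filter_eq_empty_iff] at h
  funext j
  have := h (Finset.mem_univ j)
  simpa using this

lemma eq_single_of_wt_eq_one {n : ℕ} {v : Fin n → ZMod 2} {j : Fin n} (h : wt v = 1)
    (hj : v j ≠ 0) : v = Pi.single j (1 : ZMod 2) := by
  rw [wt, Finset.card_eq_one] at h
  obtain ⟨a, ha⟩ := h
  have hja : j = a := by
    have : j ∈ Finset.univ.filter fun j' => v j' ≠ 0 := by simp [hj]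
    rw [ha] at this; simpa using this
  subst hja
  funext j'
  rcases eq_or_ne j' j with rfl | hne
  · have : v j' = 1 := by
      have : v j' ≠ 0 := hj
      revert this; generalize v j' = a; revert a; decide
    simp [this]
  · have : j' ∉ Finset.univ.filter fun j'' => v j'' ≠ 0 := by
      rw [ha]; simpa using hne
    simp only [Finset.mem_filter, Finset.mem_univ, true_and, not_not] at this
    simp [this, Pi.single_eq_of_ne hne]

/-- unit-or-zero vector indexed by `Option (Fin n)` -/
def dvec {n : ℕ} : Option (Fin n) → (Fin n → ZMod 2) :=
  fun o => o.elim 0 (fun j => Pi.single j 1)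

lemma wt_dvec {n : ℕ} (o : Option (Fin n)) : wt (dvec o) ≤ 1 := by
  cases o with
  | none => simp [dvec, wt_zero]
  | some j => simp [dvec, wt_single]

lemma dvec_inj {n : ℕ} : Function.Injective (dvec (n := n)) := by
  intro o o' h
  cases o with
  | none => cases o' with
    | none => rfl
    | some j =>
      exfalso
      have := congrFun h j
      simp [dvec, Pi.single_eq_same] at this
  | some j => cases o' with
    | none =>
      exfalso
      have := congrFun h j
      simp [dvec, Pi.single_eq_same] at this
    | some j' =>
      congr 1
      by_contra hne
      have := congrFun h j
      have h1 : dvec (some j) j = 1 := by simp [dvec]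
      have h2 : dvec (some j') j = 0 := by
        simp [dvec, Pi.single_apply, hne]
      rw [h1, h2] at this
      exact one_ne_zero this

/-- source with perturbation at terminal `k` -/
def src {n : ℕ} (k : Fin 3) (b : Fin n → ZMod 2) (o : Option (Fin n)) :
    Fin 3 → Fin n → ZMod 2 :=
  fun i => if i = k then b + dvec o else b

lemma src_mem {n : ℕ} (k : Fin 3) (b : Fin n → ZMod 2) (o : Option (Fin n)) :
    src k b o ∈ hammingS 3 n := by
  refine ⟨b, fun i => if i = k then dvec o else 0, fun i => ?_, ?_⟩
  · by_cases h : i = k <;> simp [src, h]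
  · have : ∀ i : Fin 3, wt (if i = k then dvec o else 0) = if i = k then wt (dvec o) else 0 := by
      intro i; by_cases h : i = k <;> simp [h, wt_zero]
    simp only [this, Finset.sum_ite_eq' Finset.univ k, Finset.mem_univ, if_true]
    exact wt_dvec o

lemma src_apply_ne {n : ℕ} {k i : Fin 3} (h : i ≠ k) (b : Fin n → ZMod 2)
    (o : Option (Fin n)) : src k b o i = b := by simp [src, h]

lemma src_apply_eq {n : ℕ} (k : Fin 3) (b : Fin n → ZMod 2) (o : Option (Fin n)) :
    src k b o k = b + dvec o := by simp [src]

lemma src_injective {n : ℕ} (k : Fin 3) :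
    Function.Injective (fun p : (Fin n → ZMod 2) × Option (Fin n) => src k p.1 p.2) := by
  intro ⟨b, o⟩ ⟨b', o'⟩ h
  simp only at h
  obtain ⟨i, hik⟩ : ∃ i : Fin 3, i ≠ k := by
    rcases eq_or_ne (0 : Fin 3) k with h0 | h0
    · exact ⟨1, by rw [← h0]; decide⟩
    · exact ⟨0, h0⟩
  have hb : b = b' := by
    have := congrFun h i
    rwa [src_apply_ne hik, src_apply_ne hik] at this
  subst hb
  have := congrFun h k
  rw [src_apply_eq, src_apply_eq] at this
  have : dvec o = dvec o' := by
    have := add_left_cancel this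
    exact this
  exact Prod.ext rfl (dvec_inj this)

/-- cardinality of a submodule of a finite vector space -/
lemma card_submodule {K V : Type*} [Field K] [Fintype K] [AddCommGroup V] [Module K V]
    [Finite V] (P : Submodule K V) :
    Nat.card ↥P = Fintype.card K ^ Module.finrank K ↥P := by
  have : Fintype ↥P := Fintype.ofFinite _
  rw [Nat.card_eq_fintype_card]
  exact Module.card_eq_pow_finrank

/-- every Hamming source is in the range of the obvious parametrization -/
lemma hammingS_param {n : ℕ} {x : Fin 3 → Fin n → ZMod 2} (hx : x ∈ hammingS 3 n) :
    ∃ p : (Fin n → ZMod 2) × Option (Fin 3 × Fin n),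
      x = p.2.elim (fun _ => p.1) (fun q => src q.1 p.1 (some q.2)) := by
  obtain ⟨b, v, hxb, hwt⟩ := hx
  by_cases hv : ∀ i, v i = 0
  · exact ⟨(b, none), by funext i; simp [hxb i, hv i]⟩
  · push_neg at hv
    obtain ⟨i, hi⟩ := hv
    obtain ⟨j, hj⟩ : ∃ j, v i j ≠ 0 := by
      by_contra hcon
      push_neg at hcon
      exact hi (funext hcon)
    have hmem : j ∈ Finset.univ.filter fun j' => v i j' ≠ 0 := by simp [hj]
    have hwi : 1 ≤ wt (v i) := by
      rw [wt]
      exact Finset.card_pos.mpr ⟨j, hmem⟩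
    have hsingle : wt (v i) ≤ ∑ k, wt (v k) :=
      Finset.single_le_sum (f := fun k => wt (v k)) (fun _ _ => Nat.zero_le _) (Finset.mem_univ i)
    have hwi1 : wt (v i) = 1 := le_antisymm (hsingle.trans hwt) hwi
    have hothers : ∀ k, k ≠ i → v k = 0 := by
      intro k hk
      apply eq_zero_of_wt_eq_zero
      have hpair : wt (v i) + wt (v k) ≤ ∑ l, wt (v l) := by
        have : ({i, k} : Finset (Fin 3)) ⊆ Finset.univ := Finset.subset_univ _
        calc wt (v i) + wt (v k) = ∑ l ∈ ({i, k} : Finset (Fin 3)), wt (v l) := by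
              rw [Finset.sum_pair (Ne.symm hk)]
          _ ≤ ∑ l, wt (v l) := Finset.sum_le_sum_of_subset this
      omega
    refine ⟨(b, some (i, j)), ?_⟩
    funext k
    simp only [Option.elim]
    rcases eq_or_ne k i with rfl | hk
    · rw [src_apply_eq, hxb k]
      congr 1
      have : dvec (some j) = Pi.single j (1 : ZMod 2) := rfl
      rw [this]
      exact eq_single_of_wt_eq_one hwi1 hj
    · rw [src_apply_ne hk, hxb k, hothers k hk, add_zero]

set_option maxHeartbeats 1000000 in
/-- (Rate region for perfect three-source codes) If a perfect three-source
Slepian-Wolf code for Hamming sources of length `n` with total rate `M` exists,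
with null spaces `C ⊕ U`, `C ⊕ V`, `W`, where `C` is the span of the pairwise
intersections of the null spaces, and `c,u,v,w` denote the dimensions, then
`3n − 2M ≤ c ≤ 3n − 2M + 3` and `M − n − 2 ≤ u, v, w ≤ M − n`. -/
theorem stmt_10 (n M m₁ m₂ m₃ : ℕ) (hM : m₁ + m₂ + m₃ = M)
    (H₁ : Matrix (Fin m₁) (Fin n) (ZMod 2))
    (H₂ : Matrix (Fin m₂) (Fin n) (ZMod 2))
    (H₃ : Matrix (Fin m₃) (Fin n) (ZMod 2))
    (hperf : Set.BijOn
      (fun x : Fin 3 → Fin n → ZMod 2 => (H₁.mulVec (x 0), H₂.mulVec (x 1), H₃.mulVec (x 2)))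
      (hammingS 3 n) Set.univ)
    (C U V W : Submodule (ZMod 2) (Fin n → ZMod 2))
    (hC : C = (LinearMap.ker H₂.mulVecLin ⊓ LinearMap.ker H₃.mulVecLin) ⊔
              (LinearMap.ker H₁.mulVecLin ⊓ LinearMap.ker H₃.mulVecLin) ⊔
              (LinearMap.ker H₁.mulVecLin ⊓ LinearMap.ker H₂.mulVecLin))
    (h1 : LinearMap.ker H₁.mulVecLin = C ⊔ U) (h1' : C ⊓ U = ⊥)
    (h2 : LinearMap.ker H₂.mulVecLin = C ⊔ V) (h2' : C ⊓ V = ⊥)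
    (h3 : LinearMap.ker H₃.mulVecLin = W)
    (c u v w : ℕ)
    (hc : c = Module.finrank (ZMod 2) C) (hu : u = Module.finrank (ZMod 2) U)
    (hv : v = Module.finrank (ZMod 2) V) (hw : w = Module.finrank (ZMod 2) W) :
    (3 * (n : ℤ) - 2 * M ≤ c ∧ (c : ℤ) ≤ 3 * n - 2 * M + 3) ∧
    ((M : ℤ) - n - 2 ≤ u ∧ (u : ℤ) ≤ M - n) ∧
    ((M : ℤ) - n - 2 ≤ v ∧ (v : ℤ) ≤ M - n) ∧
    ((M : ℤ) - n - 2 ≤ w ∧ (w : ℤ) ≤ M - n) := by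
  classical
  have hrn : Module.finrank (ZMod 2) (Fin n → ZMod 2) = n := by
    simp [Module.finrank_pi]
  -- surjectivity of the three maps
  have hs1 : Function.Surjective H₁.mulVecLin := by
    intro y
    obtain ⟨x, _, hxy⟩ := hperf.2.2 (Set.mem_univ (y, 0, 0))
    exact ⟨x 0, by simpa [Matrix.mulVecLin_apply] using congrArg Prod.fst hxy⟩
  have hs2 : Function.Surjective H₂.mulVecLin := by
    intro y
    obtain ⟨x, _, hxy⟩ := hperf.2.2 (Set.mem_univ (0, y, 0))
    exact ⟨x 1, by simpa [Matrix.mulVecLin_apply] using congrArg (Prod.fst ∘ Prod.snd) hxy⟩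
  have hs3 : Function.Surjective H₃.mulVecLin := by
    intro y
    obtain ⟨x, _, hxy⟩ := hperf.2.2 (Set.mem_univ (0, 0, y))
    exact ⟨x 2, by simpa [Matrix.mulVecLin_apply] using congrArg (Prod.snd ∘ Prod.snd) hxy⟩
  -- rank-nullity for the three matrices
  have hfr1 : Module.finrank (ZMod 2) ↥(LinearMap.ker H₁.mulVecLin) + m₁ = n := by
    have h := LinearMap.finrank_range_add_finrank_ker H₁.mulVecLin
    rw [LinearMap.range_eq_top.mpr hs1, finrank_top, hrn] at h
    simp only [Module.finrank_pi, Fintype.card_fin] at h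
    omega
  have hfr2 : Module.finrank (ZMod 2) ↥(LinearMap.ker H₂.mulVecLin) + m₂ = n := by
    have h := LinearMap.finrank_range_add_finrank_ker H₂.mulVecLin
    rw [LinearMap.range_eq_top.mpr hs2, finrank_top, hrn] at h
    simp only [Module.finrank_pi, Fintype.card_fin] at h
    omega
  have hfr3 : Module.finrank (ZMod 2) ↥(LinearMap.ker H₃.mulVecLin) + m₃ = n := by
    have h := LinearMap.finrank_range_add_finrank_ker H₃.mulVecLin
    rw [LinearMap.range_eq_top.mpr hs3, finrank_top, hrn] at h
    simp only [Module.finrank_pi, Fintype.card_fin] at h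
    omega
  -- triple intersection is trivial
  have htriple : LinearMap.ker H₁.mulVecLin ⊓ LinearMap.ker H₂.mulVecLin ⊓
      LinearMap.ker H₃.mulVecLin = ⊥ := by
    rw [eq_bot_iff]
    rintro t ⟨⟨ht1, ht2⟩, ht3⟩
    rw [SetLike.mem_coe, LinearMap.mem_ker, Matrix.mulVecLin_apply] at ht1 ht2 ht3
    have hm1 : (fun _ : Fin 3 => t) ∈ hammingS 3 n :=
      ⟨t, 0, fun i => (add_zero t).symm, by simp [wt_zero]⟩
    have hm0 : (fun _ : Fin 3 => (0 : Fin n → ZMod 2)) ∈ hammingS 3 n :=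
      ⟨0, 0, fun i => (add_zero 0).symm, by simp [wt_zero]⟩
    have heq := hperf.2.1 hm1 hm0 (by
      simp only [ht1, ht2, ht3, Matrix.mulVec_zero])
    have : t = 0 := congrFun heq 0
    simp [this]
  have hBD : LinearMap.ker H₂.mulVecLin ⊓ LinearMap.ker H₃.mulVecLin = ⊥ := by
    have hsub : LinearMap.ker H₂.mulVecLin ⊓ LinearMap.ker H₃.mulVecLin ≤
        LinearMap.ker H₁.mulVecLin := by
      have h' : LinearMap.ker H₂.mulVecLin ⊓ LinearMap.ker H₃.mulVecLin ≤ C := by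
        rw [hC]; exact le_sup_left.trans le_sup_left
      rw [h1]; exact h'.trans le_sup_left
    rw [eq_bot_iff]
    intro t ht
    have : t ∈ LinearMap.ker H₁.mulVecLin ⊓ LinearMap.ker H₂.mulVecLin ⊓
        LinearMap.ker H₃.mulVecLin := ⟨⟨hsub ht, ht.1⟩, ht.2⟩
    rw [htriple] at this
    exact this
  have hAD : LinearMap.ker H₁.mulVecLin ⊓ LinearMap.ker H₃.mulVecLin = ⊥ := by
    have hsub : LinearMap.ker H₁.mulVecLin ⊓ LinearMap.ker H₃.mulVecLin ≤
        LinearMap.ker H₂.mulVecLin := by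
      have h' : LinearMap.ker H₁.mulVecLin ⊓ LinearMap.ker H₃.mulVecLin ≤ C := by
        rw [hC]; exact le_sup_right.trans le_sup_left
      rw [h2]; exact h'.trans le_sup_left
    rw [eq_bot_iff]
    intro t ht
    have : t ∈ LinearMap.ker H₁.mulVecLin ⊓ LinearMap.ker H₂.mulVecLin ⊓
        LinearMap.ker H₃.mulVecLin := ⟨⟨ht.1, hsub ht⟩, ht.2⟩
    rw [htriple] at this
    exact this
  have hCAB : C = LinearMap.ker H₁.mulVecLin ⊓ LinearMap.ker H₂.mulVecLin := by
    rw [hC, hBD, hAD]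
    simp
  -- dimension bookkeeping
  have hcu : Module.finrank (ZMod 2) ↥(LinearMap.ker H₁.mulVecLin) = c + u := by
    have h := Submodule.finrank_sup_add_finrank_inf_eq C U
    rw [h1', finrank_bot, add_zero] at h
    rw [h1, h, hc, hu]
  have hcv : Module.finrank (ZMod 2) ↥(LinearMap.ker H₂.mulVecLin) = c + v := by
    have h := Submodule.finrank_sup_add_finrank_inf_eq C V
    rw [h2', finrank_bot, add_zero] at h
    rw [h2, h, hc, hv]
  have hwD : Module.finrank (ZMod 2) ↥(LinearMap.ker H₃.mulVecLin) = w := by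
    rw [h3, hw]
  have hL4 : Module.finrank (ZMod 2) ↥(LinearMap.ker H₂.mulVecLin) +
      Module.finrank (ZMod 2) ↥(LinearMap.ker H₃.mulVecLin) ≤ n := by
    have h := Submodule.finrank_sup_add_finrank_inf_eq (LinearMap.ker H₂.mulVecLin)
      (LinearMap.ker H₃.mulVecLin)
    rw [hBD, finrank_bot, add_zero] at h
    rw [← h]
    exact le_trans (Submodule.finrank_le _) (le_of_eq hrn)
  have hL5 : Module.finrank (ZMod 2) ↥(LinearMap.ker H₁.mulVecLin) +
      Module.finrank (ZMod 2) ↥(LinearMap.ker H₃.mulVecLin) ≤ n := by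
    have h := Submodule.finrank_sup_add_finrank_inf_eq (LinearMap.ker H₁.mulVecLin)
      (LinearMap.ker H₃.mulVecLin)
    rw [hAD, finrank_bot, add_zero] at h
    rw [← h]
    exact le_trans (Submodule.finrank_le _) (le_of_eq hrn)
  have hcAB : Module.finrank (ZMod 2)
      ↥(LinearMap.ker H₁.mulVecLin ⊓ LinearMap.ker H₂.mulVecLin) = c := by
    rw [← hCAB, hc]
  have hL6 : Module.finrank (ZMod 2) ↥(LinearMap.ker H₁.mulVecLin) +
      Module.finrank (ZMod 2) ↥(LinearMap.ker H₂.mulVecLin) ≤ n + c := by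
    have h := Submodule.finrank_sup_add_finrank_inf_eq (LinearMap.ker H₁.mulVecLin)
      (LinearMap.ker H₂.mulVecLin)
    rw [hcAB] at h
    rw [← h]
    exact Nat.add_le_add_right (le_trans (Submodule.finrank_le _) (le_of_eq hrn)) c
  -- counting: the perfect-code cardinality bound
  have hE4 : 2 ^ (m₁ + m₂ + m₃) ≤ (3 * n + 1) * 2 ^ n := by
    have hfin : (hammingS 3 n).Finite := Set.toFinite _
    have hle1 : 2 ^ m₁ * (2 ^ m₂ * 2 ^ m₃) ≤ (hammingS 3 n).ncard := by
      have hcardT : Nat.card ((Fin m₁ → ZMod 2) × (Fin m₂ → ZMod 2) × (Fin m₃ → ZMod 2))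
          = 2 ^ m₁ * (2 ^ m₂ * 2 ^ m₃) := by
        simp [Nat.card_eq_fintype_card, Fintype.card_fun, ZMod.card]
      calc 2 ^ m₁ * (2 ^ m₂ * 2 ^ m₃)
          = (Set.univ : Set ((Fin m₁ → ZMod 2) × (Fin m₂ → ZMod 2) ×
              (Fin m₃ → ZMod 2))).ncard := by
            rw [Set.ncard_univ, hcardT]
        _ ≤ ((fun x : Fin 3 → Fin n → ZMod 2 =>
              (H₁.mulVec (x 0), H₂.mulVec (x 1), H₃.mulVec (x 2))) '' hammingS 3 n).ncard :=
            Set.ncard_le_ncard hperf.2.2 (Set.toFinite _)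
        _ ≤ (hammingS 3 n).ncard := Set.ncard_image_le hfin
    have hle2 : (hammingS 3 n).ncard ≤ 2 ^ n * (3 * n + 1) := by
      let g : (Fin n → ZMod 2) × Option (Fin 3 × Fin n) → ↥(hammingS 3 n) := fun p =>
        match p with
        | (b, none) => ⟨fun _ => b, ⟨b, 0, fun _ => (add_zero b).symm, by simp [wt_zero]⟩⟩
        | (b, some q) => ⟨src q.1 b (some q.2), src_mem _ _ _⟩
      have hg : Function.Surjective g := by
        rintro ⟨x, hx⟩
        obtain ⟨⟨b, o⟩, hp⟩ := hammingS_param hx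
        cases o with
        | none => exact ⟨(b, none), Subtype.ext hp.symm⟩
        | some q => exact ⟨(b, some q), Subtype.ext hp.symm⟩
      calc (hammingS 3 n).ncard = Nat.card ↥(hammingS 3 n) := (Nat.card_coe_set_eq _).symm
        _ ≤ Nat.card ((Fin n → ZMod 2) × Option (Fin 3 × Fin n)) :=
            Nat.card_le_card_of_surjective g hg
        _ = 2 ^ n * (3 * n + 1) := by
            simp [Nat.card_eq_fintype_card, Fintype.card_fun, ZMod.card,
              Fintype.card_option, mul_comm]
    calc 2 ^ (m₁ + m₂ + m₃) = 2 ^ m₁ * (2 ^ m₂ * 2 ^ m₃) := by ring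
      _ ≤ (hammingS 3 n).ncard := hle1
      _ ≤ 2 ^ n * (3 * n + 1) := hle2
      _ = (3 * n + 1) * 2 ^ n := by ring
  -- packing bounds
  have hE1 : n + 1 ≤ 2 ^ m₁ := by
    have hkψ : LinearMap.ker ((H₂.mulVecLin).prod (H₃.mulVecLin)) = ⊥ := by
      rw [LinearMap.ker_prod]; exact hBD
    have hfrψ : Module.finrank (ZMod 2)
        ↥(LinearMap.range ((H₂.mulVecLin).prod (H₃.mulVecLin))) = n := by
      have h := LinearMap.finrank_range_add_finrank_ker ((H₂.mulVecLin).prod (H₃.mulVecLin))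
      rw [hkψ, finrank_bot, add_zero, hrn] at h
      exact h
    have hcardψ : Nat.card ↥(LinearMap.range ((H₂.mulVecLin).prod (H₃.mulVecLin)))
        = 2 ^ n := by
      rw [card_submodule, hfrψ, ZMod.card]
    have hinj : Function.Injective (fun p : (Fin n → ZMod 2) × Option (Fin n) =>
        ((H₁.mulVec (p.1 + dvec p.2),
          ⟨((H₂.mulVecLin).prod (H₃.mulVecLin)) p.1, LinearMap.mem_range_self _ p.1⟩) :
          (Fin m₁ → ZMod 2) × ↥(LinearMap.range ((H₂.mulVecLin).prod (H₃.mulVecLin))))) := by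
      rintro ⟨b, o⟩ ⟨b', o'⟩ hpe
      simp only [Prod.mk.injEq, Subtype.mk.injEq, LinearMap.prod_apply, Pi.prod, Function.prod,
        Matrix.mulVecLin_apply] at hpe
      obtain ⟨he1, he2, he3⟩ := hpe
      have hseq := hperf.2.1 (src_mem 0 b o) (src_mem 0 b' o') (by
        simp only
        rw [src_apply_eq, src_apply_eq, src_apply_ne (by decide : (1:Fin 3) ≠ 0),
          src_apply_ne (by decide : (1:Fin 3) ≠ 0),
          src_apply_ne (by decide : (2:Fin 3) ≠ 0), src_apply_ne (by decide : (2:Fin 3) ≠ 0),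
          he1, he2, he3])
      exact src_injective 0 hseq
    have hcard := Nat.card_le_card_of_injective _ hinj
    rw [Nat.card_prod, Nat.card_prod, hcardψ] at hcard
    simp only [Nat.card_eq_fintype_card, Fintype.card_fun, Fintype.card_option,
      Fintype.card_fin, ZMod.card] at hcard
    have h5 : (n + 1) * 2 ^ n ≤ 2 ^ m₁ * 2 ^ n := by
      calc (n + 1) * 2 ^ n = 2 ^ n * (n + 1) := by ring
        _ ≤ 2 ^ m₁ * 2 ^ n := hcard
    exact Nat.le_of_mul_le_mul_right h5 (by positivity)
  have hE2 : n + 1 ≤ 2 ^ m₂ := by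
    have hkψ : LinearMap.ker ((H₁.mulVecLin).prod (H₃.mulVecLin)) = ⊥ := by
      rw [LinearMap.ker_prod]; exact hAD
    have hfrψ : Module.finrank (ZMod 2)
        ↥(LinearMap.range ((H₁.mulVecLin).prod (H₃.mulVecLin))) = n := by
      have h := LinearMap.finrank_range_add_finrank_ker ((H₁.mulVecLin).prod (H₃.mulVecLin))
      rw [hkψ, finrank_bot, add_zero, hrn] at h
      exact h
    have hcardψ : Nat.card ↥(LinearMap.range ((H₁.mulVecLin).prod (H₃.mulVecLin)))
        = 2 ^ n := by
      rw [card_submodule, hfrψ, ZMod.card]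
    have hinj : Function.Injective (fun p : (Fin n → ZMod 2) × Option (Fin n) =>
        ((H₂.mulVec (p.1 + dvec p.2),
          ⟨((H₁.mulVecLin).prod (H₃.mulVecLin)) p.1, LinearMap.mem_range_self _ p.1⟩) :
          (Fin m₂ → ZMod 2) × ↥(LinearMap.range ((H₁.mulVecLin).prod (H₃.mulVecLin))))) := by
      rintro ⟨b, o⟩ ⟨b', o'⟩ hpe
      simp only [Prod.mk.injEq, Subtype.mk.injEq, LinearMap.prod_apply, Pi.prod, Function.prod,
        Matrix.mulVecLin_apply] at hpe
      obtain ⟨he2, he1, he3⟩ := hpe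
      have hseq := hperf.2.1 (src_mem 1 b o) (src_mem 1 b' o') (by
        simp only
        rw [src_apply_eq, src_apply_eq, src_apply_ne (by decide : (0:Fin 3) ≠ 1),
          src_apply_ne (by decide : (0:Fin 3) ≠ 1),
          src_apply_ne (by decide : (2:Fin 3) ≠ 1), src_apply_ne (by decide : (2:Fin 3) ≠ 1),
          he1, he2, he3])
      exact src_injective 1 hseq
    have hcard := Nat.card_le_card_of_injective _ hinj
    rw [Nat.card_prod, Nat.card_prod, hcardψ] at hcard
    simp only [Nat.card_eq_fintype_card, Fintype.card_fun, Fintype.card_option,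
      Fintype.card_fin, ZMod.card] at hcard
    have h5 : (n + 1) * 2 ^ n ≤ 2 ^ m₂ * 2 ^ n := by
      calc (n + 1) * 2 ^ n = 2 ^ n * (n + 1) := by ring
        _ ≤ 2 ^ m₂ * 2 ^ n := hcard
    exact Nat.le_of_mul_le_mul_right h5 (by positivity)
  have hE3 : (n + 1) * 2 ^ c ≤ 2 ^ m₃ := by
    have hkψ : LinearMap.ker ((H₁.mulVecLin).prod (H₂.mulVecLin)) =
        LinearMap.ker H₁.mulVecLin ⊓ LinearMap.ker H₂.mulVecLin := LinearMap.ker_prod _ _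
    have hfrψ : Module.finrank (ZMod 2)
        ↥(LinearMap.range ((H₁.mulVecLin).prod (H₂.mulVecLin))) + c = n := by
      have h := LinearMap.finrank_range_add_finrank_ker ((H₁.mulVecLin).prod (H₂.mulVecLin))
      rw [hkψ, hcAB, hrn] at h
      exact h
    have hcardψ : Nat.card ↥(LinearMap.range ((H₁.mulVecLin).prod (H₂.mulVecLin)))
        = 2 ^ (Module.finrank (ZMod 2)
            ↥(LinearMap.range ((H₁.mulVecLin).prod (H₂.mulVecLin)))) := by
      rw [card_submodule, ZMod.card]
    have hinj : Function.Injective (fun p : (Fin n → ZMod 2) × Option (Fin n) =>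
        ((⟨((H₁.mulVecLin).prod (H₂.mulVecLin)) p.1, LinearMap.mem_range_self _ p.1⟩,
          H₃.mulVec (p.1 + dvec p.2)) :
          ↥(LinearMap.range ((H₁.mulVecLin).prod (H₂.mulVecLin))) × (Fin m₃ → ZMod 2))) := by
      rintro ⟨b, o⟩ ⟨b', o'⟩ hpe
      simp only [Prod.mk.injEq, Subtype.mk.injEq, LinearMap.prod_apply, Pi.prod, Function.prod,
        Matrix.mulVecLin_apply] at hpe
      obtain ⟨⟨he1, he2⟩, he3⟩ := hpe
      have hseq := hperf.2.1 (src_mem 2 b o) (src_mem 2 b' o') (by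
        simp only
        rw [src_apply_eq, src_apply_eq, src_apply_ne (by decide : (0:Fin 3) ≠ 2),
          src_apply_ne (by decide : (0:Fin 3) ≠ 2),
          src_apply_ne (by decide : (1:Fin 3) ≠ 2), src_apply_ne (by decide : (1:Fin 3) ≠ 2),
          he1, he2, he3])
      exact src_injective 2 hseq
    have hcard := Nat.card_le_card_of_injective _ hinj
    rw [Nat.card_prod, Nat.card_prod, hcardψ] at hcard
    simp only [Nat.card_eq_fintype_card, Fintype.card_fun, Fintype.card_option,
      Fintype.card_fin, ZMod.card] at hcard
    have h5 : 2 ^ n * ((n + 1) * 2 ^ c) ≤ 2 ^ n * 2 ^ m₃ := by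
      calc 2 ^ n * ((n + 1) * 2 ^ c) = (2 ^ n * (n + 1)) * 2 ^ c := by ring
        _ ≤ (2 ^ (Module.finrank (ZMod 2)
              ↥(LinearMap.range ((H₁.mulVecLin).prod (H₂.mulVecLin)))) * 2 ^ m₃) * 2 ^ c :=
            Nat.mul_le_mul_right _ hcard
        _ = 2 ^ (Module.finrank (ZMod 2)
              ↥(LinearMap.range ((H₁.mulVecLin).prod (H₂.mulVecLin))) + c) * 2 ^ m₃ := by
            ring
        _ = 2 ^ n * 2 ^ m₃ := by rw [hfrψ]
    exact Nat.le_of_mul_le_mul_left h5 (by positivity)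
  -- convert exponential facts to linear ones
  have hpow : ∀ a b : ℕ, (2:ℕ) ^ a < 2 ^ b → a < b := by
    intro a b h
    exact (Nat.pow_lt_pow_iff_right (by norm_num)).mp h
  have hL7 : m₂ + m₃ ≤ n + 1 := by
    have h1 : 2 ^ (m₂ + m₃) * (n + 1) ≤ (3 * n + 1) * 2 ^ n := by
      calc 2 ^ (m₂ + m₃) * (n + 1) ≤ 2 ^ (m₂ + m₃) * 2 ^ m₁ :=
            Nat.mul_le_mul_left _ hE1
        _ = 2 ^ (m₁ + m₂ + m₃) := by ring
        _ ≤ (3 * n + 1) * 2 ^ n := hE4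
    have h2 : 2 ^ (m₂ + m₃) * (n + 1) < (n + 1) * 2 ^ (n + 2) := by
      refine h1.trans_lt ?_
      calc (3 * n + 1) * 2 ^ n < ((n + 1) * 4) * 2 ^ n :=
            (Nat.mul_lt_mul_right (a := 2 ^ n) (by positivity)).mpr (by omega)
        _ = (n + 1) * 2 ^ (n + 2) := by ring
    have h3 : 2 ^ (m₂ + m₃) < 2 ^ (n + 2) := by
      refine lt_of_mul_lt_mul_right ?_ (Nat.zero_le (n + 1))
      calc 2 ^ (m₂ + m₃) * (n + 1) < (n + 1) * 2 ^ (n + 2) := h2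
        _ = 2 ^ (n + 2) * (n + 1) := by ring
    have := hpow _ _ h3
    omega
  have hL8 : m₁ + m₃ ≤ n + 1 := by
    have h1 : 2 ^ (m₁ + m₃) * (n + 1) ≤ (3 * n + 1) * 2 ^ n := by
      calc 2 ^ (m₁ + m₃) * (n + 1) ≤ 2 ^ (m₁ + m₃) * 2 ^ m₂ :=
            Nat.mul_le_mul_left _ hE2
        _ = 2 ^ (m₁ + m₂ + m₃) := by ring
        _ ≤ (3 * n + 1) * 2 ^ n := hE4
    have h2 : 2 ^ (m₁ + m₃) * (n + 1) < (n + 1) * 2 ^ (n + 2) := by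
      refine h1.trans_lt ?_
      calc (3 * n + 1) * 2 ^ n < ((n + 1) * 4) * 2 ^ n :=
            (Nat.mul_lt_mul_right (a := 2 ^ n) (by positivity)).mpr (by omega)
        _ = (n + 1) * 2 ^ (n + 2) := by ring
    have h3 : 2 ^ (m₁ + m₃) < 2 ^ (n + 2) := by
      refine lt_of_mul_lt_mul_right ?_ (Nat.zero_le (n + 1))
      calc 2 ^ (m₁ + m₃) * (n + 1) < (n + 1) * 2 ^ (n + 2) := h2
        _ = 2 ^ (n + 2) * (n + 1) := by ring
    have := hpow _ _ h3
    omega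
  have hL9 : m₁ + m₂ + c ≤ n + 1 := by
    have h1 : 2 ^ (m₁ + m₂ + c) * (n + 1) ≤ (3 * n + 1) * 2 ^ n := by
      calc 2 ^ (m₁ + m₂ + c) * (n + 1) = 2 ^ m₁ * 2 ^ m₂ * ((n + 1) * 2 ^ c) := by ring
        _ ≤ 2 ^ m₁ * 2 ^ m₂ * 2 ^ m₃ := Nat.mul_le_mul_left _ hE3
        _ = 2 ^ (m₁ + m₂ + m₃) := by ring
        _ ≤ (3 * n + 1) * 2 ^ n := hE4
    have h2 : 2 ^ (m₁ + m₂ + c) * (n + 1) < (n + 1) * 2 ^ (n + 2) := by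
      refine h1.trans_lt ?_
      calc (3 * n + 1) * 2 ^ n < ((n + 1) * 4) * 2 ^ n :=
            (Nat.mul_lt_mul_right (a := 2 ^ n) (by positivity)).mpr (by omega)
        _ = (n + 1) * 2 ^ (n + 2) := by ring
    have h3 : 2 ^ (m₁ + m₂ + c) < 2 ^ (n + 2) := by
      refine lt_of_mul_lt_mul_right ?_ (Nat.zero_le (n + 1))
      calc 2 ^ (m₁ + m₂ + c) * (n + 1) < (n + 1) * 2 ^ (n + 2) := h2
        _ = 2 ^ (n + 2) * (n + 1) := by ring
    have := hpow _ _ h3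
    omega
  rw [hcu] at hfr1 hL5 hL6
  rw [hcv] at hfr2 hL4 hL6
  rw [hwD] at hfr3 hL4 hL5
  omega
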